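/- For all integers j, m with 1 ≤ j and 2j ≤ m, the binomial identity (2(m-j)+1) C(m-j, m-2j) - (2j+1) C(m-j-1, m-2j) - (2m+1) C(m-j-1, m-2j-1) = 0 holds. -/
import Mathlib


/-- The binomial coefficient `C(a,b)` for integers, with `C(a,b) = 0` when `b < 0` or `b > a`. -/
def C (a b : ℤ) : ℤ := if 0 ≤ b ∧ b ≤ a then (a.toNat.choose b.toNat : ℤ) else 0

lemma natlem (n k : ℕ) (h : k + 1 ≤ n) :
    ((2*(n+1)+1) * (n+1).choose (k+1) : ℤ)
      = (2*((n:ℤ)-k)+1) * n.choose (k+1) + (2*((n:ℤ)+1)+2*((n:ℤ)-k)+1) * n.choose k := by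
  have h1 := Nat.choose_succ_right_eq n k
  have h2 := Nat.choose_succ_succ n k
  have h1' : ((n.choose (k+1) : ℤ)) * (k+1) = n.choose k * ((n:ℤ) - k) := by
    have := congrArg (Nat.cast : ℕ → ℤ) h1
    push_cast [Int.ofNat_sub (by omega : k ≤ n)] at this
    linarith [this]
  rw [h2]
  push_cast
  linear_combination 2 * h1'

theorem binom_identity_two (j m : ℤ) (hj : 1 ≤ j) (hjm : 2 * j ≤ m) :
    (2 * (m - j) + 1) * C (m - j) (m - 2 * j)
      - (2 * j + 1) * C (m - j - 1) (m - 2 * j)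
      - (2 * m + 1) * C (m - j - 1) (m - 2 * j - 1) = 0 := by
  rcases eq_or_lt_of_le hjm with heq | hlt
  · -- m = 2j
    have h1 : (0 ≤ m - 2*j ∧ m - 2*j ≤ m - j) := by constructor <;> omega
    have h2 : (0 ≤ m - 2*j ∧ m - 2*j ≤ m - j - 1) := by constructor <;> omega
    have h3 : ¬ (0 ≤ m - 2*j - 1 ∧ m - 2*j - 1 ≤ m - j - 1) := by omega
    rw [C, C, C, if_pos h1, if_pos h2, if_neg h3]
    have e1 : (m - 2*j).toNat = 0 := by omega
    rw [e1, Nat.choose_zero_right, Nat.choose_zero_right]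
    push_cast
    omega
  · -- m ≥ 2j + 1
    set n := (m - j - 1).toNat with hn
    set k := (m - 2*j - 1).toNat with hk
    have e1 : (m - j).toNat = n + 1 := by omega
    have e2 : (m - 2*j).toNat = k + 1 := by omega
    have e3 : (m - j - 1).toNat = n := rfl
    have e4 : (m - 2*j - 1).toNat = k := rfl
    have hkn : k + 1 ≤ n := by omega
    have h1 : (0 ≤ m - 2*j ∧ m - 2*j ≤ m - j) := by constructor <;> omega
    have h2 : (0 ≤ m - 2*j ∧ m - 2*j ≤ m - j - 1) := by constructor <;> omega
    have h3 : (0 ≤ m - 2*j - 1 ∧ m - 2*j - 1 ≤ m - j - 1) := by constructor <;> omega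
    rw [C, C, C, if_pos h1, if_pos h2, if_pos h3, e1, e2, e3, e4]
    have key := natlem n k hkn
    have en : (n : ℤ) = m - j - 1 := by omega
    have ek : (k : ℤ) = m - 2*j - 1 := by omega
    rw [en, ek] at key
    linear_combination key
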